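/- Let w be an orthogonal transformation of V with ker(id - w) = 0, and let α ∈ V be nonzero with reflection s_α. Set n = (id - w^{-1})^{-1}(α). Then ⟨n, α^∨⟩ = 1, where α^∨ = 2α/⟨α,α⟩. -/

import Mathlib

local notation "⟪" x ", " y "⟫_ℝ" => @inner ℝ _ _ x y

noncomputable section

variable {V : Type*} [NormedAddCommGroup V] [InnerProductSpace ℝ V] [FiniteDimensional ℝ V]

/-- Let `w` be an orthogonal transformation of `V` with
`ker(id - w) = 0`, let `α ≠ 0`, and let `n = (id - w⁻¹)⁻¹ α`, i.e. `n - w⁻¹ n = α`.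
Then `⟪n, α^∨⟫ = 1` where `α^∨ = 2α/⟪α,α⟫`. -/
theorem inner_n_coroot_eq_one (w : V ≃ₗᵢ[ℝ] V)
    (hw : LinearMap.ker ((1 : V →ₗ[ℝ] V) - w.toLinearEquiv.toLinearMap) = ⊥)
    (α : V) (hα : α ≠ 0) (n : V) (hn : n - w.symm n = α) :
    ⟪n, (2 / ⟪α, α⟫_ℝ) • α⟫_ℝ = 1 := by
  have hs : w.symm n = n - α := by rw [← hn]; abel
  have hnorm : ⟪n - α, n - α⟫_ℝ = ⟪n, n⟫_ℝ := by
    rw [← hs, real_inner_self_eq_norm_sq, real_inner_self_eq_norm_sq,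
      LinearIsometryEquiv.norm_map]
  have hexp : ⟪n - α, n - α⟫_ℝ = ⟪n, n⟫_ℝ - 2 * ⟪n, α⟫_ℝ + ⟪α, α⟫_ℝ := by
    rw [inner_sub_sub_self, real_inner_comm α n]; ring
  have key : 2 * ⟪n, α⟫_ℝ = ⟪α, α⟫_ℝ := by linarith [hexp ▸ hnorm]
  have hne : ⟪α, α⟫_ℝ ≠ 0 := inner_self_ne_zero.mpr hα
  rw [real_inner_smul_right]
  field_simp
  linarith
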